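/- Jordan decomposition approximation of almost-states: let B be an order-unit space (realized as affine functions on its state space S(B)), let g be a bounded linear functional on B and δ ≥ 0 with 1 ≥ ‖g‖ ≥ g(e_B) ≥ 1 − δ > 0. Then there exists a state q ∈ S(B) with ‖q − g‖ ≤ (3/2)δ. -/

import Mathlib

set_option maxHeartbeats 1000000

namespace ExistsStateCloseAux

variable {B : Type*} [NormedAddCommGroup B] [NormedSpace ℝ B]

/-- The set of values `μ y` over states `μ`. -/
def SSet (e y : B) : Set ℝ := {r | ∃ μ : B →L[ℝ] ℝ, μ e = 1 ∧ ‖μ‖ = 1 ∧ r = μ y}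

noncomputable def SS (e y : B) : ℝ := sSup (SSet e y)
noncomputable def mI (e y : B) : ℝ := sInf (SSet e y)

theorem habs (μ : B →L[ℝ] ℝ) (hμn : ‖μ‖ = 1) (b : B) : |μ b| ≤ ‖b‖ := by
  calc |μ b| ≤ ‖μ‖ * ‖b‖ := μ.le_opNorm b
  _ = ‖b‖ := by rw [hμn, one_mul]

theorem mem_SSet_bounds {e y : B} {r : ℝ} (hr : r ∈ SSet e y) : |r| ≤ ‖y‖ := by
  obtain ⟨μ, hμe, hμn, rfl⟩ := hr
  exact habs μ hμn y

theorem SSet_nonempty (hne : ∃ μ : B →L[ℝ] ℝ, μ e = 1 ∧ ‖μ‖ = 1) (y : B) :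
    (SSet e y).Nonempty := by
  obtain ⟨μ, hμe, hμn⟩ := hne
  exact ⟨μ y, μ, hμe, hμn, rfl⟩

theorem SSet_bddAbove (e y : B) : BddAbove (SSet e y) :=
  ⟨‖y‖, fun _ hr => (le_abs_self _).trans (mem_SSet_bounds hr)⟩

theorem SSet_bddBelow (e y : B) : BddBelow (SSet e y) :=
  ⟨-‖y‖, fun _ hr => neg_le_of_abs_le (mem_SSet_bounds hr)⟩

theorem le_SS (e y : B) (μ : B →L[ℝ] ℝ) (hμe : μ e = 1) (hμn : ‖μ‖ = 1) : μ y ≤ SS e y :=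
  le_csSup (SSet_bddAbove e y) ⟨μ, hμe, hμn, rfl⟩

theorem mI_le (e y : B) (μ : B →L[ℝ] ℝ) (hμe : μ e = 1) (hμn : ‖μ‖ = 1) : mI e y ≤ μ y :=
  csInf_le (SSet_bddBelow e y) ⟨μ, hμe, hμn, rfl⟩

theorem SS_le_norm (hne : ∃ μ : B →L[ℝ] ℝ, μ e = 1 ∧ ‖μ‖ = 1) (y : B) : SS e y ≤ ‖y‖ :=
  csSup_le (SSet_nonempty hne y) (fun r hr => (le_abs_self r).trans (mem_SSet_bounds hr))

theorem neg_norm_le_SS (hne : ∃ μ : B →L[ℝ] ℝ, μ e = 1 ∧ ‖μ‖ = 1) (y : B) :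
    -‖y‖ ≤ SS e y := by
  obtain ⟨μ, hμe, hμn⟩ := hne
  exact le_trans (neg_le_of_abs_le (habs μ hμn y)) (le_SS e y μ hμe hμn)

theorem neg_norm_le_mI (hne : ∃ μ : B →L[ℝ] ℝ, μ e = 1 ∧ ‖μ‖ = 1) (y : B) :
    -‖y‖ ≤ mI e y :=
  le_csInf (SSet_nonempty hne y) (fun _ hr => neg_le_of_abs_le (mem_SSet_bounds hr))

theorem mI_le_norm (hne : ∃ μ : B →L[ℝ] ℝ, μ e = 1 ∧ ‖μ‖ = 1) (y : B) : mI e y ≤ ‖y‖ := by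
  obtain ⟨μ, hμe, hμn⟩ := hne
  exact (mI_le e y μ hμe hμn).trans ((le_abs_self _).trans (habs μ hμn y))

theorem SS_smul (hne : ∃ μ : B →L[ℝ] ℝ, μ e = 1 ∧ ‖μ‖ = 1) (c : ℝ) (hc : 0 < c) (y : B) :
    SS e (c • y) = c * SS e y := by
  apply le_antisymm
  · apply csSup_le (SSet_nonempty hne _)
    rintro r ⟨μ, hμe, hμn, rfl⟩
    have h : μ (c • y) = c * μ y := by simp
    rw [h]
    exact mul_le_mul_of_nonneg_left (le_SS e y μ hμe hμn) hc.le
  · have h : SS e y ≤ SS e (c • y) / c := by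
      apply csSup_le (SSet_nonempty hne _)
      rintro r ⟨μ, hμe, hμn, rfl⟩
      rw [le_div_iff₀ hc]
      have h2 : μ y * c = μ (c • y) := by simp; ring
      rw [h2]
      exact le_SS e _ μ hμe hμn
    calc c * SS e y ≤ c * (SS e (c • y) / c) := mul_le_mul_of_nonneg_left h hc.le
    _ = SS e (c • y) := by field_simp

theorem lemA (e : B)
    (hkadison : ∀ b : B,
      ‖b‖ = sSup {r : ℝ | ∃ μ : B →L[ℝ] ℝ, μ e = 1 ∧ ‖μ‖ = 1 ∧ r = |μ b|})
    (g : B →L[ℝ] ℝ) (δ : ℝ) (h1 : ‖g‖ ≤ 1) (h3 : 1 - δ ≤ g e)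
    (c : B) (hc : ∀ μ : B →L[ℝ] ℝ, μ e = 1 → ‖μ‖ = 1 → 0 ≤ μ c) :
    -(δ / 2) * ‖c‖ ≤ g c := by
  have hnorm_le : ∀ (b : B) (t : ℝ), 0 ≤ t →
      (∀ μ : B →L[ℝ] ℝ, μ e = 1 → ‖μ‖ = 1 → |μ b| ≤ t) → ‖b‖ ≤ t := by
    intro b t ht h
    rw [hkadison b]
    apply Real.sSup_le _ ht
    rintro r ⟨μ, hμe, hμn, rfl⟩
    exact h μ hμe hμn
  have hcarg : ‖(2 : ℝ) • c - ‖c‖ • e‖ ≤ ‖c‖ := by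
    apply hnorm_le _ _ (norm_nonneg c)
    intro μ hμe hμn
    have h0 : 0 ≤ μ c := hc μ hμe hμn
    have h1' : μ c ≤ ‖c‖ := (le_abs_self _).trans (habs μ hμn c)
    have hval : μ ((2 : ℝ) • c - ‖c‖ • e) = 2 * μ c - ‖c‖ := by
      simp [map_sub, map_smul, hμe]
    rw [hval, abs_le]
    constructor <;> linarith
  have hb : |g ((2 : ℝ) • c - ‖c‖ • e)| ≤ ‖c‖ := by
    calc |g ((2 : ℝ) • c - ‖c‖ • e)| ≤ ‖g‖ * ‖(2 : ℝ) • c - ‖c‖ • e‖ := g.le_opNorm _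
    _ ≤ 1 * ‖c‖ := mul_le_mul h1 hcarg (norm_nonneg _) zero_le_one
    _ = ‖c‖ := one_mul _
  have hval : g ((2 : ℝ) • c - ‖c‖ • e) = 2 * g c - ‖c‖ * g e := by
    simp [map_sub, map_smul]
  rw [hval, abs_le] at hb
  nlinarith [mul_nonneg (norm_nonneg c) (by linarith : (0:ℝ) ≤ g e - 1 + δ), hb.1]

theorem lemB' (e : B) (hne : ∃ μ : B →L[ℝ] ℝ, μ e = 1 ∧ ‖μ‖ = 1)
    (hkadison : ∀ b : B,
      ‖b‖ = sSup {r : ℝ | ∃ μ : B →L[ℝ] ℝ, μ e = 1 ∧ ‖μ‖ = 1 ∧ r = |μ b|})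
    (g : B →L[ℝ] ℝ) (δ : ℝ) (hδ : 0 ≤ δ) (h1 : ‖g‖ ≤ 1) (h3 : 1 - δ ≤ g e)
    (hge1 : g e ≤ 1) (y : B) :
    g y ≤ SS e y + δ * ‖y‖ := by
  set c : B := SS e y • e - y with hcdef
  have hc : ∀ μ : B →L[ℝ] ℝ, μ e = 1 → ‖μ‖ = 1 → 0 ≤ μ c := by
    intro μ hμe hμn
    have : μ c = SS e y - μ y := by simp [hcdef, map_sub, map_smul, hμe]
    rw [this]
    linarith [le_SS e y μ hμe hμn]
  have hSSub : SS e y ≤ ‖y‖ := SS_le_norm hne y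
  have hSSlb : -‖y‖ ≤ SS e y := neg_norm_le_SS hne y
  have hcnorm : ‖c‖ ≤ SS e y + ‖y‖ := by
    rw [hkadison c]
    apply Real.sSup_le _ (by linarith)
    rintro r ⟨μ, hμe, hμn, rfl⟩
    have h0 : 0 ≤ μ c := hc μ hμe hμn
    have hval : μ c = SS e y - μ y := by simp [hcdef, map_sub, map_smul, hμe]
    have hμy : -‖y‖ ≤ μ y := neg_le_of_abs_le (habs μ hμn y)
    rw [abs_of_nonneg h0, hval]
    linarith
  have hA : -(δ / 2) * ‖c‖ ≤ g c := lemA e hkadison g δ h1 h3 c hc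
  have hgc : g c = SS e y * g e - g y := by simp [hcdef, map_sub, map_smul]
  have hcnn : (0:ℝ) ≤ ‖c‖ := norm_nonneg c
  have hprod1 : 0 ≤ (‖y‖ - SS e y) * (δ - (1 - g e)) :=
    mul_nonneg (by linarith) (by linarith)
  have hprod2 : 0 ≤ (‖y‖ + SS e y) * (1 - g e) :=
    mul_nonneg (by linarith) (by linarith)
  nlinarith [mul_le_mul_of_nonneg_left hcnorm (by linarith : (0:ℝ) ≤ δ / 2)]

theorem lemB (e : B) (hne : ∃ μ : B →L[ℝ] ℝ, μ e = 1 ∧ ‖μ‖ = 1)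
    (hkadison : ∀ b : B,
      ‖b‖ = sSup {r : ℝ | ∃ μ : B →L[ℝ] ℝ, μ e = 1 ∧ ‖μ‖ = 1 ∧ r = |μ b|})
    (g : B →L[ℝ] ℝ) (δ : ℝ) (hδ : 0 ≤ δ) (h1 : ‖g‖ ≤ 1) (h3 : 1 - δ ≤ g e)
    (hge1 : g e ≤ 1) (y : B) :
    mI e y - δ * ‖y‖ ≤ g y := by
  set c : B := y - mI e y • e with hcdef
  have hc : ∀ μ : B →L[ℝ] ℝ, μ e = 1 → ‖μ‖ = 1 → 0 ≤ μ c := by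
    intro μ hμe hμn
    have : μ c = μ y - mI e y := by simp [hcdef, map_sub, map_smul, hμe]
    rw [this]
    linarith [mI_le e y μ hμe hμn]
  have hmub : mI e y ≤ ‖y‖ := mI_le_norm hne y
  have hmlb : -‖y‖ ≤ mI e y := neg_norm_le_mI hne y
  have hcnorm : ‖c‖ ≤ ‖y‖ - mI e y := by
    rw [hkadison c]
    apply Real.sSup_le _ (by linarith)
    rintro r ⟨μ, hμe, hμn, rfl⟩
    have h0 : 0 ≤ μ c := hc μ hμe hμn
    have hval : μ c = μ y - mI e y := by simp [hcdef, map_sub, map_smul, hμe]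
    have hμy : μ y ≤ ‖y‖ := (le_abs_self _).trans (habs μ hμn y)
    rw [abs_of_nonneg h0, hval]
    linarith
  have hA : -(δ / 2) * ‖c‖ ≤ g c := lemA e hkadison g δ h1 h3 c hc
  have hgc : g c = g y - mI e y * g e := by simp [hcdef, map_sub, map_smul]
  have hcnn : (0:ℝ) ≤ ‖c‖ := norm_nonneg c
  have hprod1 : 0 ≤ (‖y‖ - mI e y) * (1 - g e) :=
    mul_nonneg (by linarith) (by linarith)
  have hprod2 : 0 ≤ (‖y‖ + mI e y) * (δ - (1 - g e)) :=
    mul_nonneg (by linarith) (by linarith)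
  nlinarith [mul_le_mul_of_nonneg_left hcnorm (by linarith : (0:ℝ) ≤ δ / 2)]


theorem SS_add (hne : ∃ μ : B →L[ℝ] ℝ, μ e = 1 ∧ ‖μ‖ = 1) (y z : B) :
    SS e (y + z) ≤ SS e y + SS e z := by
  apply csSup_le (SSet_nonempty hne _)
  rintro r ⟨μ, hμe, hμn, rfl⟩
  have h : μ (y + z) = μ y + μ z := map_add μ y z
  rw [h]
  exact add_le_add (le_SS e y μ hμe hμn) (le_SS e z μ hμe hμn)

end ExistsStateCloseAux

open ExistsStateCloseAux in
/-- Jordan decomposition approximation of almost-states: let `(B, e)`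
be an order-unit space (encoded via Kadison's representation: the norm is the sup of
`|μ(b)|` over states, the states being the functionals `μ` with `μ(e) = ‖μ‖ = 1`).
If `g` is a bounded linear functional and `δ ≥ 0` with
`1 ≥ ‖g‖ ≥ g(e) ≥ 1 − δ > 0`, then there is a state `q` with `‖q − g‖ ≤ (3/2)δ`. -/
theorem exists_state_close {B : Type*} [NormedAddCommGroup B] [NormedSpace ℝ B]
    (e : B)
    (hkadison : ∀ b : B,
      ‖b‖ = sSup {r : ℝ | ∃ μ : B →L[ℝ] ℝ, μ e = 1 ∧ ‖μ‖ = 1 ∧ r = |μ b|})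
    (g : B →L[ℝ] ℝ) (δ : ℝ) (hδ : 0 ≤ δ)
    (h1 : ‖g‖ ≤ 1) (h2 : g e ≤ ‖g‖) (h3 : 1 - δ ≤ g e) (h4 : 0 < 1 - δ) :
    ∃ q : B →L[ℝ] ℝ, q e = 1 ∧ ‖q‖ = 1 ∧ ‖q - g‖ ≤ (3 / 2) * δ := by
  have hge_pos : 0 < g e := lt_of_lt_of_le h4 h3
  have hge1 : g e ≤ 1 := h2.trans h1
  -- states exist
  have hne : ∃ μ : B →L[ℝ] ℝ, μ e = 1 ∧ ‖μ‖ = 1 := by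
    by_contra hemp
    push_neg at hemp
    have he : ‖e‖ = 0 := by
      rw [hkadison e]
      have hset : {r : ℝ | ∃ μ : B →L[ℝ] ℝ, μ e = 1 ∧ ‖μ‖ = 1 ∧ r = |μ e|} = ∅ := by
        ext r
        simp only [Set.mem_setOf_eq, Set.mem_empty_iff_false, iff_false, not_exists]
        rintro μ ⟨hμe, hμn, rfl⟩
        exact (hemp μ hμe) hμn
      rw [hset, Real.sSup_empty]
    have h := g.le_opNorm e
    rw [he, mul_zero] at h
    have h' : |g e| ≤ 0 := by simpa using h
    nlinarith [le_abs_self (g e)]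
  have he1 : ‖e‖ = 1 := by
    obtain ⟨μ₀, hμ₀e, hμ₀n⟩ := hne
    apply le_antisymm
    · rw [hkadison e]
      apply Real.sSup_le _ zero_le_one
      rintro r ⟨μ, hμe, hμn, rfl⟩
      rw [hμe]; simp
    · have h := habs μ₀ hμ₀n e
      rw [hμ₀e] at h
      simpa using h
  -- the inf-convolution sublinear functional
  set Rng : B → Set ℝ :=
    fun b => {r | ∃ x : B, r = SS e (b - x) + g x + 3/2 * δ * ‖x‖} with hRng
  have hRng_ne : ∀ b, (Rng b).Nonempty := fun b =>
    ⟨SS e (b - 0) + g 0 + 3/2 * δ * ‖(0:B)‖, 0, rfl⟩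
  have hRng_lb : ∀ b, ∀ r ∈ Rng b, g b - 3/2 * δ * ‖b‖ ≤ r := by
    rintro b r ⟨x, rfl⟩
    have hB' := lemB' e hne hkadison g δ hδ h1 h3 hge1 (b - x)
    have htri : ‖b - x‖ ≤ ‖b‖ + ‖x‖ := norm_sub_le b x
    have hgbx : g (b - x) = g b - g x := map_sub g b x
    nlinarith [mul_nonneg hδ (norm_nonneg b), mul_nonneg hδ (norm_nonneg x),
      mul_le_mul_of_nonneg_left htri hδ]
  have hbdd : ∀ b, BddBelow (Rng b) := fun b =>
    ⟨g b - 3/2 * δ * ‖b‖, fun r hr => hRng_lb b r hr⟩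
  set N : B → ℝ := fun b => sInf (Rng b) with hNdef
  have hN_le : ∀ b, ∀ r ∈ Rng b, N b ≤ r := fun b r hr => csInf_le (hbdd b) hr
  have hN_le_SS : ∀ b, N b ≤ SS e b := by
    intro b
    have h := hN_le b _ ⟨0, rfl⟩
    simpa using h
  have hSS0 : SS e (0:B) = 0 :=
    le_antisymm (by simpa using SS_le_norm hne (0:B))
      (by simpa using neg_norm_le_SS hne (0:B))
  have hN_le_g : ∀ b, N b ≤ g b + 3/2 * δ * ‖b‖ := by
    intro b
    have h := hN_le b _ ⟨b, rfl⟩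
    rw [sub_self, hSS0] at h
    linarith
  -- sublinearity
  have N_add : ∀ b₁ b₂ : B, N (b₁ + b₂) ≤ N b₁ + N b₂ := by
    intro b₁ b₂
    rw [← sub_le_iff_le_add']
    apply le_csInf (hRng_ne b₂)
    rintro r₂ ⟨x₂, rfl⟩
    rw [sub_le_iff_le_add', ← sub_le_iff_le_add]
    apply le_csInf (hRng_ne b₁)
    rintro r₁ ⟨x₁, rfl⟩
    rw [sub_le_iff_le_add]
    have h0 := hN_le (b₁ + b₂) _ ⟨x₁ + x₂, rfl⟩
    have heq : (b₁ + b₂) - (x₁ + x₂) = (b₁ - x₁) + (b₂ - x₂) := by abel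
    rw [heq] at h0
    have hSSadd := SS_add hne (b₁ - x₁) (b₂ - x₂)
    have hmap : g (x₁ + x₂) = g x₁ + g x₂ := map_add g x₁ x₂
    have hnormadd : ‖x₁ + x₂‖ ≤ ‖x₁‖ + ‖x₂‖ := norm_add_le x₁ x₂
    have hδ' : (0:ℝ) ≤ 3/2 * δ := by linarith
    nlinarith [mul_le_mul_of_nonneg_left hnormadd hδ']
  have N_hom : ∀ c : ℝ, 0 < c → ∀ b : B, N (c • b) = c * N b := by
    intro c hc b
    apply le_antisymm
    · have hdiv : N (c • b) / c ≤ N b := by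
        apply le_csInf (hRng_ne b)
        rintro r ⟨x, rfl⟩
        rw [div_le_iff₀ hc]
        have h0 := hN_le (c • b) _ ⟨c • x, rfl⟩
        have h1' : c • b - c • x = c • (b - x) := (smul_sub c b x).symm
        rw [h1', SS_smul hne c hc] at h0
        have h2' : g (c • x) = c * g x := by simp
        have h3' : ‖c • x‖ = c * ‖x‖ := by
          rw [norm_smul, Real.norm_eq_abs, abs_of_pos hc]
        rw [h2', h3'] at h0
        calc N (c • b) ≤ c * SS e (b - x) + c * g x + 3/2 * δ * (c * ‖x‖) := h0
        _ = (SS e (b - x) + g x + 3/2 * δ * ‖x‖) * c := by ring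
      calc N (c • b) = N (c • b) / c * c := by field_simp
      _ ≤ N b * c := mul_le_mul_of_nonneg_right hdiv hc.le
      _ = c * N b := mul_comm _ _
    · apply le_csInf (hRng_ne (c • b))
      rintro r ⟨x, rfl⟩
      have h0 := hN_le b _ ⟨c⁻¹ • x, rfl⟩
      have h1' : c • (b - c⁻¹ • x) = c • b - x := by
        rw [smul_sub, smul_inv_smul₀ hc.ne']
      have h2' : SS e (c • b - x) = c * SS e (b - c⁻¹ • x) := by
        rw [← h1', SS_smul hne c hc]
      have h3' : g x = c * g (c⁻¹ • x) := by
        have : g (c⁻¹ • x) = c⁻¹ * g x := by simp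
        rw [this, mul_inv_cancel_left₀ hc.ne']
      have h4' : ‖x‖ = c * ‖c⁻¹ • x‖ := by
        rw [norm_smul, Real.norm_eq_abs, abs_of_pos (inv_pos.mpr hc),
          mul_inv_cancel_left₀ hc.ne']
      calc c * N b ≤ c * (SS e (b - c⁻¹ • x) + g (c⁻¹ • x) + 3/2 * δ * ‖c⁻¹ • x‖) :=
        mul_le_mul_of_nonneg_left h0 hc.le
      _ = SS e (c • b - x) + g x + 3/2 * δ * ‖x‖ := by rw [h2', h3', h4']; ring
  -- lower bound on the span of e
  have hfbound : ∀ t : ℝ, ∀ r ∈ Rng (t • e), t ≤ r := by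
    rintro t r ⟨x, rfl⟩
    have hkey : t - SS e (t • e - x) ≤ mI e x := by
      apply le_csInf (SSet_nonempty hne x)
      rintro r' ⟨μ, hμe, hμn, rfl⟩
      have hval : μ (t • e - x) = t - μ x := by simp [map_sub, map_smul, hμe]
      have h0 : μ (t • e - x) ≤ SS e (t • e - x) := le_SS e _ μ hμe hμn
      rw [hval] at h0
      linarith
    have hBx := lemB e hne hkadison g δ hδ h1 h3 hge1 x
    have hδx : δ * ‖x‖ ≤ 3/2 * δ * ‖x‖ := by
      nlinarith [mul_nonneg hδ (norm_nonneg x)]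
    linarith
  -- Hahn–Banach extension
  have he_ne : e ≠ 0 := by
    intro h
    rw [h, norm_zero] at he1
    exact zero_ne_one he1
  have hf : ∀ x : (LinearPMap.mkSpanSingleton (K := ℝ) (σ := RingHom.id ℝ) e (1:ℝ) he_ne).domain,
      (LinearPMap.mkSpanSingleton (K := ℝ) (σ := RingHom.id ℝ) e (1:ℝ) he_ne) x ≤ N x := by
    rintro ⟨x, hx⟩
    rcases Submodule.mem_span_singleton.mp hx with ⟨t, rfl⟩
    have happ : (LinearPMap.mkSpanSingleton (K := ℝ) (σ := RingHom.id ℝ) e (1:ℝ) he_ne) ⟨t • e, hx⟩ = t • (1:ℝ) :=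
      LinearPMap.mkSpanSingleton'_apply e 1 _ t hx
    rw [happ, smul_eq_mul, mul_one]
    exact le_csInf (hRng_ne _) (fun r hr => hfbound t r hr)
  obtain ⟨q₀, hagree, hqle⟩ :=
    exists_extension_of_le_sublinear (LinearPMap.mkSpanSingleton (K := ℝ) (σ := RingHom.id ℝ) e (1:ℝ) he_ne) N N_hom N_add hf
  have hq₀e : q₀ e = 1 := by
    have h := hagree ⟨e, Submodule.mem_span_singleton_self e⟩
    rw [LinearPMap.mkSpanSingleton_apply] at h
    exact h
  have hq₀abs : ∀ b : B, |q₀ b| ≤ ‖b‖ := by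
    intro b
    rw [abs_le]
    constructor
    · have h := (hqle (-b)).trans ((hN_le_SS (-b)).trans (SS_le_norm hne (-b)))
      rw [map_neg, norm_neg] at h
      linarith
    · exact (hqle b).trans ((hN_le_SS b).trans (SS_le_norm hne b))
  have hq₀diff : ∀ b : B, |q₀ b - g b| ≤ 3/2 * δ * ‖b‖ := by
    intro b
    rw [abs_le]
    constructor
    · have h := (hqle (-b)).trans (hN_le_g (-b))
      rw [map_neg, map_neg, norm_neg] at h
      linarith
    · have h := (hqle b).trans (hN_le_g b)
      linarith
  set q : B →L[ℝ] ℝ := LinearMap.mkContinuous q₀ 1 (fun b => by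
    rw [Real.norm_eq_abs, one_mul]; exact hq₀abs b) with hqdef
  have hqapp : ∀ b : B, q b = q₀ b := fun b => rfl
  have hqe : q e = 1 := by rw [hqapp, hq₀e]
  refine ⟨q, hqe, ?_, ?_⟩
  · apply le_antisymm
    · exact LinearMap.mkContinuous_norm_le q₀ zero_le_one _
    · have h := q.le_opNorm e
      rw [he1, mul_one, hqe] at h
      simpa using h
  · apply ContinuousLinearMap.opNorm_le_bound _ (by linarith : (0:ℝ) ≤ 3/2 * δ)
    intro b
    rw [ContinuousLinearMap.sub_apply, Real.norm_eq_abs, hqapp]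
    calc |q₀ b - g b| ≤ 3/2 * δ * ‖b‖ := hq₀diff b
    _ = 3 / 2 * δ * ‖b‖ := by norm_num
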